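/- The sequence d ↦ C(k,d)·C(n-k,d), for d = 0,...,min(k,n-k), is unimodal: there exists an index m such that the sequence is nondecreasing on {0,...,m} and nonincreasing on {m,...,min(k,n-k)}. -/
import Mathlib


theorem shell_unimodal (n k : ℕ) (hk1 : 1 ≤ k) (hk2 : k ≤ n - 1) :
    ∃ m ≤ min k (n - k),
      (∀ d₁ d₂, d₁ ≤ d₂ → d₂ ≤ m →
        Nat.choose k d₁ * Nat.choose (n - k) d₁ ≤ Nat.choose k d₂ * Nat.choose (n - k) d₂)
      ∧ (∀ d₁ d₂, m ≤ d₁ → d₁ ≤ d₂ → d₂ ≤ min k (n - k) →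
        Nat.choose k d₂ * Nat.choose (n - k) d₂ ≤ Nat.choose k d₁ * Nat.choose (n - k) d₁) := by
  set D := min k (n - k) with hD
  set f : ℕ → ℕ := fun d => Nat.choose k d * Nat.choose (n - k) d with hf
  set C : ℕ → Prop := fun d => (d + 1) ^ 2 ≤ (k - d) * (n - k - d) with hC
  have key : ∀ d, f (d + 1) * (d + 1) ^ 2 = f d * ((k - d) * (n - k - d)) := by
    intro d
    have h1 := Nat.choose_succ_right_eq k d
    have h2 := Nat.choose_succ_right_eq (n - k) d
    calc f (d + 1) * (d + 1) ^ 2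
        = (Nat.choose k (d + 1) * (d + 1)) * (Nat.choose (n - k) (d + 1) * (d + 1)) := by
          simp only [hf]; ring
      _ = (Nat.choose k d * (k - d)) * (Nat.choose (n - k) d * (n - k - d)) := by rw [h1, h2]
      _ = f d * ((k - d) * (n - k - d)) := by simp only [hf]; ring
  have pos : ∀ d : ℕ, 0 < (d + 1) ^ 2 := fun d => by positivity
  have up : ∀ d, C d → f d ≤ f (d + 1) := by
    intro d hCd
    have h : f d * (d + 1) ^ 2 ≤ f (d + 1) * (d + 1) ^ 2 := by
      rw [key d]; exact Nat.mul_le_mul_left _ hCd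
    exact Nat.le_of_mul_le_mul_right h (pos d)
  have down : ∀ d, ¬ C d → f (d + 1) ≤ f d := by
    intro d hCd
    have h' : (k - d) * (n - k - d) ≤ (d + 1) ^ 2 := le_of_not_ge hCd
    have h : f (d + 1) * (d + 1) ^ 2 ≤ f d * (d + 1) ^ 2 := by
      rw [key d]; exact Nat.mul_le_mul_left _ h'
    exact Nat.le_of_mul_le_mul_right h (pos d)
  have anti : ∀ d, C (d + 1) → C d := by
    intro d h
    simp only [hC] at h ⊢
    calc (d + 1) ^ 2 ≤ (d + 2) ^ 2 := Nat.pow_le_pow_left (by omega) 2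
      _ ≤ (k - (d + 1)) * (n - k - (d + 1)) := h
      _ ≤ (k - d) * (n - k - d) :=
          Nat.mul_le_mul (Nat.sub_le_sub_left (by omega) k) (Nat.sub_le_sub_left (by omega) (n - k))
  have notanti : ∀ a b, a ≤ b → ¬ C a → ¬ C b := by
    intro a b hab ha
    induction b with
    | zero => exact Nat.le_zero.mp hab ▸ ha
    | succ b ih =>
      rcases Nat.lt_or_ge a (b + 1) with h | h
      · intro hCb1; exact ih (by omega) (anti b hCb1)
      · have : a = b + 1 := le_antisymm hab h
        rwa [this] at ha
  have hex : ∃ d, ¬ C d := by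
    refine ⟨k, fun h => ?_⟩
    simp only [hC, Nat.sub_self, Nat.zero_mul, Nat.le_zero] at h
    have := pos k
    omega
  set m := min D (Nat.find hex) with hm
  have hmD : m ≤ D := min_le_left _ _
  have hCbelow : ∀ d, d < m → C d := by
    intro d hd
    rw [hm, lt_min_iff] at hd
    exact of_not_not (Nat.find_min hex hd.2)
  have hCabove : ∀ d, m ≤ d → d < D → ¬ C d := by
    intro d hd hdD
    rw [hm, min_le_iff] at hd
    rcases hd with h | h
    · omega
    · exact notanti _ _ h (Nat.find_spec hex)
  refine ⟨m, hmD, ?_, ?_⟩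
  · intro d₁ d₂ h12 h2m
    induction d₂ with
    | zero => obtain rfl := Nat.le_zero.mp h12; exact le_rfl
    | succ b ih =>
      rcases Nat.lt_or_ge d₁ (b + 1) with h | h
      · exact le_trans (ih (by omega) (by omega)) (up b (hCbelow b (by omega)))
      · have : d₁ = b + 1 := le_antisymm h12 h
        rw [this]
  · intro d₁ d₂ h1m h12 h2D
    induction d₂ with
    | zero => obtain rfl := Nat.le_zero.mp h12; exact le_rfl
    | succ b ih =>
      rcases Nat.lt_or_ge d₁ (b + 1) with h | h
      · exact le_trans (down b (hCabove b (by omega) (by omega))) (ih (by omega) (by omega))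
      · have : d₁ = b + 1 := le_antisymm h12 h
        rw [this]
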